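/- Let K(z,z) = 1/((1−|z|²)|D(z)|²) with D holomorphic and nonvanishing on 𝔻, and define K^{(0,1)}(z,z) and K^{(1,1)}(z,z) as in the Szegő kernel computation. Then the limiting intensity (K^{(1,1)}(z,z)·K(z,z) − |K^{(0,1)}(z,z)|²)/(π·K(z,z)²) equals 1/(π(1−|z|²)²) for every |z| < 1; in particular it is independent of D. -/

import Mathlib

open Complex Real Metric

set_option maxHeartbeats 4000000 in
/-- the limiting intensity computed from the Szegő kernel quantities equals
`1/(π(1−|z|²)²)` for `|z| < 1`, independently of `D`. -/
theorem stmt6 (D : ℂ → ℂ)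
    (hD : DifferentiableOn ℂ D (Metric.ball (0 : ℂ) 1))
    (hD0 : ∀ z ∈ Metric.ball (0 : ℂ) 1, D z ≠ 0) :
    ∀ z : ℂ, ‖z‖ < 1 →
      let s : ℂ := ((1 - (‖z‖) ^ 2 : ℝ) : ℂ)
      let K : ℂ := 1 / (s * (((‖D z‖) ^ 2 : ℝ) : ℂ))
      let K01 : ℂ := z * K / s - (starRingEnd ℂ) (deriv D z) * K / (starRingEnd ℂ) (D z)
      let K11 : ℂ := (K + (starRingEnd ℂ) z * K01 + z * (starRingEnd ℂ) K01) / s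
        + (((‖deriv D z‖) ^ 2 : ℝ) : ℂ)
          / (s * (((‖D z‖) ^ 4 : ℝ) : ℂ))
      (K11 * K - (((‖K01‖) ^ 2 : ℝ) : ℂ)) / ((π : ℂ) * K ^ 2)
        = 1 / ((π : ℂ) * s ^ 2) := by
  intro z hz
  have habs : ∀ x : ℂ, ((‖x‖ : ℝ) : ℂ) ^ 2 = x * (starRingEnd ℂ) x := by
    intro x
    rw [← Complex.ofReal_pow, Complex.sq_norm]
    exact_mod_cast (Complex.mul_conj x).symm
  have habs4 : ((‖D z‖ : ℝ) : ℂ) ^ 4 = (D z * (starRingEnd ℂ) (D z)) ^ 2 := by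
    have : (((‖D z‖ : ℝ) : ℂ)) ^ 4 = ((((‖D z‖ : ℝ)) : ℂ) ^ 2) ^ 2 := by
      ring
    rw [this, habs]
  have hw : D z ≠ 0 := hD0 z (by simpa [Metric.mem_ball, dist_zero_right] using hz)
  have hwc : (starRingEnd ℂ) (D z) ≠ 0 := by simpa using hw
  have hs : (1 : ℂ) - z * (starRingEnd ℂ) z ≠ 0 := by
    rw [Complex.mul_conj]
    intro h
    have h2 : (Complex.normSq z : ℝ) = 1 := by
      have := sub_eq_zero.mp h
      exact_mod_cast this.symm
    have h3 : Complex.normSq z < 1 := by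
      rw [← Complex.sq_norm]
      nlinarith [norm_nonneg z]
    linarith
  have hs' : (1 : ℂ) - (starRingEnd ℂ) z * z ≠ 0 := by
    rwa [mul_comm]
  have hpi : (π : ℂ) ≠ 0 := by exact_mod_cast Real.pi_ne_zero
  simp only []
  push_cast
  simp only [habs4, habs]
  simp only [map_sub, map_div₀, map_mul, map_one, Complex.conj_conj, Complex.conj_ofReal]
  generalize (starRingEnd ℂ) z = cz at *
  generalize (starRingEnd ℂ) (D z) = cw at *
  generalize (starRingEnd ℂ) (deriv D z) = cd at *
  generalize D z = w at *
  generalize deriv D z = d at *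
  simp only [mul_comm cz z]
  obtain ⟨t, ht⟩ : ∃ t : ℂ, t = 1 - z * cz := ⟨_, rfl⟩
  rw [← ht] at hs ⊢
  have e1 : z * (1 / (t * (w * cw))) / t - cd * (1 / (t * (w * cw))) / cw
      = (z * cw - t * cd) / (t ^ 2 * w * cw ^ 2) := by
    field_simp
  have e2 : cz * (1 / (t * (cw * w))) / t - d * (1 / (t * (cw * w))) / w
      = (cz * w - t * d) / (t ^ 2 * w ^ 2 * cw) := by
    field_simp
  rw [e1, e2]
  field_simp
  rw [ht]
  ring
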